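/- If V satisfies the complementary slackness conditions with a dual-feasible μ whose state-marginals are strictly positive — i.e., V is primal feasible and μ(s,a)·[r(s,a) + γ Σ_{s'} P(s'|s,a) V(s') − V(s)] = 0 for all (s,a) — then V = V*, the optimal value function. -/
import Mathlib


open scoped BigOperators

/-- `P` is a transition kernel: each `P s a` is a probability distribution on states. -/
def IsKernel {S A : Type*} [Fintype S] (P : S → A → S → ℝ) : Prop :=
  ∀ s a, (∀ s', 0 ≤ P s a s') ∧ (∑ s', P s a s') = 1

/-- `π` is a randomized stationary policy. -/
def IsPolicy {S A : Type*} [Fintype A] (π : S → A → ℝ) : Prop :=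
  ∀ s, (∀ a, 0 ≤ π s a) ∧ (∑ a, π s a) = 1

/-- State-transition matrix induced by a policy. -/
noncomputable def Pmat {S A : Type*} [Fintype A] (P : S → A → S → ℝ) (π : S → A → ℝ) :
    Matrix S S ℝ :=
  Matrix.of fun s s' => ∑ a, π s a * P s a s'

/-- Expected one-step reward under a policy. -/
noncomputable def rPol {S A : Type*} [Fintype A] (r : S → A → ℝ) (π : S → A → ℝ) : S → ℝ :=
  fun s => ∑ a, π s a * r s a

/-- Expected discounted reward of the stationary policy `π` started at `s`. -/
noncomputable def polValue {S A : Type*} [Fintype S] [Fintype A] [DecidableEq S]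
    (P : S → A → S → ℝ) (r : S → A → ℝ) (γ : ℝ) (π : S → A → ℝ) : S → ℝ :=
  fun s => ∑' t : ℕ, γ ^ t * ((Pmat P π ^ t).mulVec (rPol r π)) s

/-- The Bellman optimality operator. -/
noncomputable def bellman {S A : Type*} [Fintype S] [Fintype A]
    (P : S → A → S → ℝ) (r : S → A → ℝ) (γ : ℝ) (V : S → ℝ) : S → ℝ :=
  fun s => ⨆ a, (r s a + γ * ∑ s', P s a s' * V s')

/-- Primal (LP) feasibility: `V ≥ T V` pointwise, written constraint-wise. -/
def PrimalFeasible {S A : Type*} [Fintype S]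
    (P : S → A → S → ℝ) (r : S → A → ℝ) (γ : ℝ) (V : S → ℝ) : Prop :=
  ∀ s a, r s a + γ * ∑ s', P s a s' * V s' ≤ V s

/-- Dual (LP) feasibility: nonnegativity and the flow-conservation constraint. -/
def DualFeasible {S A : Type*} [Fintype S] [Fintype A]
    (P : S → A → S → ℝ) (q : S → ℝ) (γ : ℝ) (μ : S → A → ℝ) : Prop :=
  (∀ s a, 0 ≤ μ s a) ∧
  ∀ s, ∑ a, μ s a = (1 - γ) * q s + γ * ∑ s', ∑ a', P s' a' s * μ s' a'

/-- primal feasibility plus complementary slackness with a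
dual-feasible `μ` having strictly positive state-marginals forces `V = V*`. -/
theorem complementary_slackness_implies_optimal
    {S A : Type*} [Fintype S] [Fintype A] [Nonempty S] [Nonempty A]
    (P : S → A → S → ℝ) (r : S → A → ℝ) (γ : ℝ) (q : S → ℝ)
    (hP : IsKernel P) (hγ0 : 0 ≤ γ) (hγ1 : γ < 1)
    (hq : ∀ s, 0 < q s) (hq1 : ∑ s, q s = 1)
    (Vstar : S → ℝ) (hfix : bellman P r γ Vstar = Vstar)
    (V : S → ℝ) (hV : PrimalFeasible P r γ V)
    (μ : S → A → ℝ) (hμ : DualFeasible P q γ μ)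
    (hpos : ∀ s, 0 < ∑ a, μ s a)
    (hcs : ∀ s a, μ s a * (r s a + γ * (∑ s', P s a s' * V s') - V s) = 0) :
    V = Vstar := by
  -- Step 1: V is a fixed point of the Bellman operator.
  have hVfix : ∀ s, bellman P r γ V s = V s := by
    intro s
    apply le_antisymm
    · exact ciSup_le fun a => hV s a
    · -- some a has μ s a > 0
      have hex : ∃ a, μ s a ≠ 0 := by
        by_contra h
        push_neg at h
        have : (∑ a, μ s a) = 0 := Finset.sum_eq_zero fun a _ => h a
        exact absurd this (ne_of_gt (hpos s))
      obtain ⟨a, ha⟩ := hex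
      have heq : r s a + γ * (∑ s', P s a s' * V s') = V s := by
        have := hcs s a
        have h2 : r s a + γ * (∑ s', P s a s' * V s') - V s = 0 :=
          (mul_eq_zero.mp this).resolve_left ha
        linarith
      calc V s = r s a + γ * ∑ s', P s a s' * V s' := heq.symm
        _ ≤ bellman P r γ V s := by
            simp only [bellman]
            exact le_ciSup (f := fun a => r s a + γ * ∑ s', P s a s' * V s')
              (Set.Finite.bddAbove (Set.finite_range _)) a
  -- Step 2: contraction / uniqueness of fixed point.
  have hSne : (Finset.univ : Finset S).Nonempty := Finset.univ_nonempty
  set d : ℝ := Finset.univ.sup' hSne (fun s => |V s - Vstar s|) with hd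
  have hdmem : ∀ s, |V s - Vstar s| ≤ d := fun s =>
    Finset.le_sup' (fun s => |V s - Vstar s|) (Finset.mem_univ s)
  have hd0 : 0 ≤ d := le_trans (abs_nonneg _) (hdmem (Classical.arbitrary S))
  have key : ∀ s, |V s - Vstar s| ≤ γ * d := by
    intro s
    have hstep : ∀ (a : A), |(∑ s', P s a s' * V s') - (∑ s', P s a s' * Vstar s')| ≤ d := by
      intro a
      rw [← Finset.sum_sub_distrib]
      calc |∑ s', (P s a s' * V s' - P s a s' * Vstar s')|
          ≤ ∑ s', |P s a s' * V s' - P s a s' * Vstar s'| := Finset.abs_sum_le_sum_abs _ _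
        _ = ∑ s', P s a s' * |V s' - Vstar s'| := by
            refine Finset.sum_congr rfl fun s' _ => ?_
            rw [← mul_sub, abs_mul, abs_of_nonneg ((hP s a).1 s')]
        _ ≤ ∑ s', P s a s' * d := by
            refine Finset.sum_le_sum fun s' _ => ?_
            exact mul_le_mul_of_nonneg_left (hdmem s') ((hP s a).1 s')
        _ = d := by rw [← Finset.sum_mul, (hP s a).2, one_mul]
    have h1 : V s ≤ Vstar s + γ * d := by
      rw [← hVfix s]
      refine ciSup_le fun a => ?_
      have : r s a + γ * ∑ s', P s a s' * V s'
          ≤ (r s a + γ * ∑ s', P s a s' * Vstar s') + γ * d := by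
        have := hstep a
        have habs := (abs_le.mp this).1
        nlinarith [mul_le_mul_of_nonneg_left (abs_le.mp (hstep a)).2 hγ0]
      refine this.trans ?_
      have : r s a + γ * ∑ s', P s a s' * Vstar s' ≤ bellman P r γ Vstar s := by
        simp only [bellman]
        exact le_ciSup (f := fun a => r s a + γ * ∑ s', P s a s' * Vstar s')
          (Set.Finite.bddAbove (Set.finite_range _)) a
      rw [hfix] at this
      linarith
    have h2 : Vstar s ≤ V s + γ * d := by
      conv_lhs => rw [← hfix]
      refine ciSup_le fun a => ?_
      have : r s a + γ * ∑ s', P s a s' * Vstar s'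
          ≤ (r s a + γ * ∑ s', P s a s' * V s') + γ * d := by
        nlinarith [mul_le_mul_of_nonneg_left (neg_le_of_abs_le (hstep a)) hγ0]
      refine this.trans ?_
      have h3 : r s a + γ * ∑ s', P s a s' * V s' ≤ bellman P r γ V s := by
        simp only [bellman]
        exact le_ciSup (f := fun a => r s a + γ * ∑ s', P s a s' * V s')
          (Set.Finite.bddAbove (Set.finite_range _)) a
      rw [hVfix] at h3
      linarith
    rw [abs_le]
    constructor <;> linarith
  have hdle : d ≤ γ * d := Finset.sup'_le hSne _ fun s _ => key s
  have : d ≤ 0 := by nlinarith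
  funext s
  have := hdmem s
  have habs : |V s - Vstar s| ≤ 0 := le_trans this ‹d ≤ 0›
  have : V s - Vstar s = 0 := abs_eq_zero.mp (le_antisymm habs (abs_nonneg _))
  linarith
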